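/- For every positive integer n, the number of n×n magog matrices with no entry equal to −1 equals the n-th Catalan number (1/(n+1))·C(2n,n). -/
import Mathlib


/-- An `n × n` square sign matrix: a `{0, 1, -1}`-matrix whose rows and columns
all sum to 1, whose partial column sums lie in `{0, 1}`, and whose partial row
sums are nonnegative. -/
def IsSquareSign (n : ℕ) (A : Fin n → Fin n → ℤ) : Prop :=
  (∀ i j, A i j = -1 ∨ A i j = 0 ∨ A i j = 1) ∧
  (∀ j, ∑ i, A i j = 1) ∧
  (∀ i, ∑ j, A i j = 1) ∧
  (∀ i j : Fin n, 0 ≤ ∑ i' ∈ Finset.Iic i, A i' j ∧ ∑ i' ∈ Finset.Iic i, A i' j ≤ 1) ∧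
  (∀ i j : Fin n, 0 ≤ ∑ j' ∈ Finset.Iic j, A i j')

/-- An `n × n` magog matrix: a square sign matrix satisfying the
`(i,j)`-special inequalities (stated here with 0-based indices `i, j`,
corresponding to the paper's 1-based `i+1, j+1` with `1 ≤ i, j ≤ n-2`). -/
def IsMagog (n : ℕ) (A : Fin n → Fin n → ℤ) : Prop :=
  IsSquareSign n A ∧
  ∀ (i j : ℕ) (hi : i + 2 < n) (hj : j + 2 < n),
    0 ≤ (∑ j' ∈ Finset.Iic (⟨j, by omega⟩ : Fin n), A ⟨i + 1, by omega⟩ j')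
      + (∑ i' ∈ Finset.Iic (⟨i + 1, by omega⟩ : Fin n), A i' ⟨j + 1, by omega⟩)
      - (∑ i' ∈ Finset.Iic (⟨i, by omega⟩ : Fin n), A i' ⟨j, by omega⟩)

/-- 132-avoiding function. -/
def Avoids (n : ℕ) (σ : Fin n → Fin n) : Prop :=
  ∀ a b c : Fin n, a < b → b < c → σ a < σ c → σ c < σ b → False

abbrev AvPerm (n : ℕ) := {σ : Fin n → Fin n // Function.Bijective σ ∧ Avoids n σ}

noncomputable instance (n : ℕ) : Fintype (AvPerm n) := by
  classical exact Subtype.fintype _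

/-- Glue: values `L + (n-k)` on positions `< k`, value `n` at `k`, values `R` after. -/
def glueFun (n : ℕ) (k : Fin (n+1)) (L : Fin k → Fin k) (R : Fin (n - k) → Fin (n - k)) :
    Fin (n+1) → Fin (n+1) := fun a =>
  if h : (a : ℕ) < (k : ℕ) then ⟨(L ⟨a, h⟩ : ℕ) + (n - k), by
      have := (L ⟨a, h⟩).isLt; have := k.isLt; omega⟩
  else if h2 : (a : ℕ) = (k : ℕ) then ⟨n, by omega⟩
  else ⟨(R ⟨(a : ℕ) - k - 1, by have := a.isLt; omega⟩ : ℕ), by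
      have := (R ⟨(a : ℕ) - k - 1, by have := a.isLt; omega⟩).isLt; omega⟩

lemma glueFun_lt (n : ℕ) (k : Fin (n+1)) (L : Fin k → Fin k) (R : Fin (n-k) → Fin (n-k))
    (a : Fin (n+1)) (h : (a : ℕ) < k) :
    glueFun n k L R a = ⟨(L ⟨a, h⟩ : ℕ) + (n - k), by
      have := (L ⟨a, h⟩).isLt; have := k.isLt; omega⟩ := by
  simp [glueFun, h]

lemma glueFun_eq (n : ℕ) (k : Fin (n+1)) (L : Fin k → Fin k) (R : Fin (n-k) → Fin (n-k))
    (a : Fin (n+1)) (h : (a : ℕ) = k) :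
    glueFun n k L R a = ⟨n, by omega⟩ := by
  simp [glueFun, h]

lemma glueFun_gt (n : ℕ) (k : Fin (n+1)) (L : Fin k → Fin k) (R : Fin (n-k) → Fin (n-k))
    (a : Fin (n+1)) (h : (k : ℕ) < a) :
    glueFun n k L R a = ⟨(R ⟨(a : ℕ) - k - 1, by have := a.isLt; omega⟩ : ℕ), by
      have := (R ⟨(a : ℕ) - k - 1, by have := a.isLt; omega⟩).isLt; omega⟩ := by
  have h1 : ¬ ((a : ℕ) < k) := by omega
  have h2 : ¬ ((a : ℕ) = k) := by omega
  simp [glueFun, h1, h2]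

lemma glueFun_bijective (n : ℕ) (k : Fin (n+1)) (L : Fin k → Fin k) (R : Fin (n-k) → Fin (n-k))
    (hL : Function.Injective L) (hR : Function.Injective R) :
    Function.Bijective (glueFun n k L R) := by
  rw [← Finite.injective_iff_bijective]
  intro a b hab
  rcases lt_trichotomy (a : ℕ) (k : ℕ) with ha | ha | ha <;>
    rcases lt_trichotomy (b : ℕ) (k : ℕ) with hb | hb | hb
  · rw [glueFun_lt n k L R a ha, glueFun_lt n k L R b hb] at hab
    have h0 := congrArg Fin.val hab
    simp only [] at h0
    have h1 : (L ⟨a, ha⟩ : ℕ) = (L ⟨b, hb⟩ : ℕ) := by omega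
    have : L ⟨a, ha⟩ = L ⟨b, hb⟩ := Fin.ext h1
    have := hL this
    exact Fin.ext (by simpa using congrArg Fin.val this)
  · rw [glueFun_lt n k L R a ha, glueFun_eq n k L R b hb] at hab
    have := congrArg Fin.val hab
    have hlt := (L ⟨a, ha⟩).isLt
    simp at this; omega
  · rw [glueFun_lt n k L R a ha, glueFun_gt n k L R b hb] at hab
    have := congrArg Fin.val hab
    have h2 := (R ⟨(b : ℕ) - k - 1, by have := b.isLt; omega⟩).isLt
    simp at this; omega
  · rw [glueFun_eq n k L R a ha, glueFun_lt n k L R b hb] at hab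
    have := congrArg Fin.val hab
    have hlt := (L ⟨b, hb⟩).isLt
    simp at this; omega
  · exact Fin.ext (by omega)
  · rw [glueFun_eq n k L R a ha, glueFun_gt n k L R b hb] at hab
    have := congrArg Fin.val hab
    have h2 := (R ⟨(b : ℕ) - k - 1, by have := b.isLt; omega⟩).isLt
    simp at this; omega
  · rw [glueFun_gt n k L R a ha, glueFun_lt n k L R b hb] at hab
    have := congrArg Fin.val hab
    have h2 := (R ⟨(a : ℕ) - k - 1, by have := a.isLt; omega⟩).isLt
    simp at this; omega
  · rw [glueFun_gt n k L R a ha, glueFun_eq n k L R b hb] at hab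
    have := congrArg Fin.val hab
    have h2 := (R ⟨(a : ℕ) - k - 1, by have := a.isLt; omega⟩).isLt
    simp at this; omega
  · rw [glueFun_gt n k L R a ha, glueFun_gt n k L R b hb] at hab
    have h1 : (R ⟨(a : ℕ) - k - 1, by have := a.isLt; omega⟩ : ℕ)
        = (R ⟨(b : ℕ) - k - 1, by have := b.isLt; omega⟩ : ℕ) := by
      have := congrArg Fin.val hab; simpa using this
    have := hR (Fin.ext h1)
    have := congrArg Fin.val this
    simp at this
    exact Fin.ext (by omega)

lemma glueFun_avoids (n : ℕ) (k : Fin (n+1)) (L : Fin k → Fin k) (R : Fin (n-k) → Fin (n-k))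
    (hL : Avoids k L) (hR : Avoids (n-k) R) :
    Avoids (n+1) (glueFun n k L R) := by
  intro a b c hab hbc h1 h2
  rcases lt_trichotomy (c : ℕ) (k : ℕ) with hc | hc | hc
  · -- all three < k, pattern in L
    have ha : (a : ℕ) < k := by have := Fin.lt_iff_val_lt_val.mp hab; have := Fin.lt_iff_val_lt_val.mp hbc; omega
    have hb : (b : ℕ) < k := by have := Fin.lt_iff_val_lt_val.mp hbc; omega
    rw [glueFun_lt n k L R a ha, glueFun_lt n k L R c hc] at h1
    rw [glueFun_lt n k L R b hb, glueFun_lt n k L R c hc] at h2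
    have h1' := Fin.lt_iff_val_lt_val.mp h1
    have h2' := Fin.lt_iff_val_lt_val.mp h2
    simp only at h1' h2'
    exact hL ⟨a, ha⟩ ⟨b, hb⟩ ⟨c, hc⟩ (by simpa using Fin.lt_iff_val_lt_val.mp hab)
      (by simpa using Fin.lt_iff_val_lt_val.mp hbc)
      (Fin.lt_iff_val_lt_val.mpr (by omega)) (Fin.lt_iff_val_lt_val.mpr (by omega))
  · -- c = k : σ c = n is maximal, contradicts σ c < σ b
    rw [glueFun_eq n k L R c hc] at h2
    have h2' := Fin.lt_iff_val_lt_val.mp h2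
    have := (glueFun n k L R b).isLt
    simp only at h2'; omega
  · -- c > k : σ c < n - k; σ a < σ c forces a > k, hence all in R
    have hcval : ((glueFun n k L R c) : ℕ) < n - k := by
      rw [glueFun_gt n k L R c hc]
      exact (R _).isLt
    have h1' := Fin.lt_iff_val_lt_val.mp h1
    have ha : (k : ℕ) < a := by
      by_contra hcon
      push_neg at hcon
      rcases Nat.lt_or_ge (a : ℕ) k with haa | haa
      · rw [glueFun_lt n k L R a haa] at h1'
        simp only at h1'; omega
      · have : (a : ℕ) = k := by omega
        rw [glueFun_eq n k L R a this] at h1'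
        simp only at h1'; omega
    have hb : (k : ℕ) < b := by have := Fin.lt_iff_val_lt_val.mp hab; omega
    rw [glueFun_gt n k L R a ha, glueFun_gt n k L R c hc] at h1
    rw [glueFun_gt n k L R b hb, glueFun_gt n k L R c hc] at h2
    rw [Fin.mk_lt_mk] at h1 h2
    refine hR ⟨(a:ℕ)-k-1, by have := a.isLt; omega⟩ ⟨(b:ℕ)-k-1, by have := b.isLt; omega⟩
      ⟨(c:ℕ)-k-1, by have := c.isLt; omega⟩ ?_ ?_
      (Fin.lt_iff_val_lt_val.mpr (by exact_mod_cast h1)) (Fin.lt_iff_val_lt_val.mpr (by exact_mod_cast h2))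
    · exact Fin.mk_lt_mk.mpr (by have := Fin.lt_iff_val_lt_val.mp hab; omega)
    · exact Fin.mk_lt_mk.mpr (by have := Fin.lt_iff_val_lt_val.mp hbc; omega)

section Decomp
variable {n : ℕ} (σ : Fin (n+1) → Fin (n+1))

lemma decomp_cross (hb : Function.Bijective σ) (hav : Avoids (n+1) σ)
    (k : Fin (n+1)) (hk : σ k = ⟨n, n.lt_succ_self⟩)
    {a c : Fin (n+1)} (ha : a < k) (hc : k < c) : σ c < σ a := by
  rcases lt_trichotomy (σ a) (σ c) with h | h | h
  · exact absurd (hav a k c ha hc h (by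
      rw [hk]
      refine Fin.lt_iff_val_lt_val.mpr ?_
      have := (σ c).isLt
      have : σ c ≠ ⟨n, n.lt_succ_self⟩ := fun e => by
        have := hb.injective (e.trans hk.symm); subst this; exact absurd hc (lt_irrefl _)
      have hne : ((σ c) : ℕ) ≠ n := fun e => this (Fin.ext e)
      have := (σ c).isLt; simp; omega)) id
  · exact absurd (hb.injective (Fin.ext (congrArg Fin.val h))) (by
      intro e; subst e; exact absurd (ha.trans hc) (lt_irrefl _))
  · exact h

lemma decomp_left_ge (hb : Function.Bijective σ) (hav : Avoids (n+1) σ)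
    (k : Fin (n+1)) (hk : σ k = ⟨n, n.lt_succ_self⟩)
    {a : Fin (n+1)} (ha : a < k) : n - (k : ℕ) ≤ σ a := by
  have hsub : (Finset.Ioi k).image σ ⊆ Finset.Iio (σ a) := by
    intro v hv
    simp only [Finset.mem_image, Finset.mem_Ioi] at hv
    obtain ⟨c, hc, rfl⟩ := hv
    exact Finset.mem_Iio.mpr (decomp_cross σ hb hav k hk ha hc)
  have hcard := Finset.card_le_card hsub
  rw [Finset.card_image_of_injective _ hb.injective, Fin.card_Ioi, Fin.card_Iio] at hcard
  have := k.isLt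
  omega

lemma decomp_right_lt (hb : Function.Bijective σ) (hav : Avoids (n+1) σ)
    (k : Fin (n+1)) (hk : σ k = ⟨n, n.lt_succ_self⟩)
    {c : Fin (n+1)} (hc : k < c) : (σ c : ℕ) < n - (k : ℕ) := by
  have hnotmem : (⟨n, n.lt_succ_self⟩ : Fin (n+1)) ∉ (Finset.Iio k).image σ := by
    simp only [Finset.mem_image, Finset.mem_Iio]
    rintro ⟨a, ha, hae⟩
    have := hb.injective (hae.trans hk.symm)
    subst this; exact absurd ha (lt_irrefl _)
  have hsub : insert (⟨n, n.lt_succ_self⟩ : Fin (n+1)) ((Finset.Iio k).image σ)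
      ⊆ Finset.Ioi (σ c) := by
    intro v hv
    rcases Finset.mem_insert.mp hv with rfl | hv
    · refine Finset.mem_Ioi.mpr (Fin.lt_iff_val_lt_val.mpr ?_)
      have : σ c ≠ ⟨n, n.lt_succ_self⟩ := fun e => by
        have := hb.injective (e.trans hk.symm); subst this; exact absurd hc (lt_irrefl _)
      have hne : ((σ c) : ℕ) ≠ n := fun e => this (Fin.ext e)
      have := (σ c).isLt; simp; omega
    · simp only [Finset.mem_image, Finset.mem_Iio] at hv
      obtain ⟨a, ha, rfl⟩ := hv
      exact Finset.mem_Ioi.mpr (decomp_cross σ hb hav k hk ha hc)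
  have hcard := Finset.card_le_card hsub
  rw [Finset.card_insert_of_notMem hnotmem,
    Finset.card_image_of_injective _ hb.injective, Fin.card_Iio, Fin.card_Ioi] at hcard
  omega

end Decomp

def glue (n : ℕ) : (Σ k : Fin (n+1), AvPerm k × AvPerm (n - k)) → AvPerm (n+1) :=
  fun x => ⟨glueFun n x.1 x.2.1.1 x.2.2.1,
    glueFun_bijective n x.1 _ _ x.2.1.2.1.injective x.2.2.2.1.injective,
    glueFun_avoids n x.1 _ _ x.2.1.2.2 x.2.2.2.2⟩

lemma glue_injective (n : ℕ) : Function.Injective (glue n) := by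
  rintro ⟨k, ⟨L, hL⟩, ⟨R, hR⟩⟩ ⟨k', ⟨L', hL'⟩, ⟨R', hR'⟩⟩ h
  have hfun : glueFun n k L R = glueFun n k' L' R' := congrArg Subtype.val h
  have hbij := glueFun_bijective n k L R hL.1.injective hR.1.injective
  have hkk : k = k' := by
    have e1 : glueFun n k L R k = ⟨n, n.lt_succ_self⟩ := glueFun_eq n k L R k rfl
    have e2 : glueFun n k L R k' = ⟨n, n.lt_succ_self⟩ := by
      rw [hfun]; exact glueFun_eq n k' L' R' k' rfl
    exact hbij.injective (e1.trans e2.symm)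
  subst hkk
  have hLL : L = L' := by
    funext a
    have h1 := glueFun_lt n k L R ⟨a, by have := a.isLt; have := k.isLt; omega⟩ a.isLt
    have h2 := glueFun_lt n k L' R' ⟨a, by have := a.isLt; have := k.isLt; omega⟩ a.isLt
    rw [hfun] at h1
    have := h1.symm.trans h2
    have hv := congrArg Fin.val this
    simp only at hv
    have : (L ⟨a, a.isLt⟩ : ℕ) = (L' ⟨a, a.isLt⟩ : ℕ) := by omega
    have ha : (⟨(a : ℕ), a.isLt⟩ : Fin k) = a := Fin.ext rfl
    rw [ha] at this
    exact Fin.ext this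
  have hRR : R = R' := by
    funext c
    have hlt : ((k : ℕ) + 1 + (c : ℕ)) < n + 1 := by have := c.isLt; have := k.isLt; omega
    have hgt : (k : ℕ) < ((⟨(k : ℕ) + 1 + (c : ℕ), hlt⟩ : Fin (n+1)) : ℕ) := by show (k:ℕ) < (k:ℕ)+1+(c:ℕ); omega
    have h1 := glueFun_gt n k L R ⟨(k : ℕ) + 1 + c, hlt⟩ hgt
    have h2 := glueFun_gt n k L' R' ⟨(k : ℕ) + 1 + c, hlt⟩ hgt
    rw [hfun] at h1
    have := h1.symm.trans h2
    have hv := congrArg Fin.val this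
    simp only at hv
    have hi : (⟨(k : ℕ) + 1 + (c : ℕ) - k - 1, by have := c.isLt; omega⟩ : Fin (n - k)) = c :=
      Fin.ext (by simp; omega)
    rw [hi] at hv
    exact Fin.ext hv
  simp [hLL, hRR]

lemma glue_surjective (n : ℕ) : Function.Surjective (glue n) := by
  rintro ⟨σ, hb, hav⟩
  obtain ⟨k, hk⟩ := hb.surjective ⟨n, n.lt_succ_self⟩
  -- facts
  have hmax : ∀ a : Fin (n+1), a ≠ k → (σ a : ℕ) < n := by
    intro a ha
    have h1 : σ a ≠ ⟨n, n.lt_succ_self⟩ := fun e => ha (hb.injective (e.trans hk.symm))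
    have h2 : ((σ a) : ℕ) ≠ n := fun e => h1 (Fin.ext e)
    have := (σ a).isLt; omega
  -- left part
  have hLmem : ∀ a : Fin k, n - (k:ℕ) ≤ (σ ⟨a, by have := a.isLt; have := k.isLt; omega⟩ : ℕ) ∧
      (σ ⟨a, by have := a.isLt; have := k.isLt; omega⟩ : ℕ) < n := by
    intro a
    have halt : (⟨(a:ℕ), by have := a.isLt; have := k.isLt; omega⟩ : Fin (n+1)) < k :=
      Fin.lt_iff_val_lt_val.mp (by exact_mod_cast a.isLt)
    refine ⟨decomp_left_ge σ hb hav k hk halt, hmax _ (by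
      intro e; have := congrArg Fin.val e; simp at this; have := a.isLt; omega)⟩
  set L : Fin k → Fin k := fun a =>
    ⟨(σ ⟨a, by have := a.isLt; have := k.isLt; omega⟩ : ℕ) - (n - k), by
      have := (hLmem a).1; have := (hLmem a).2; have := k.isLt
      have := a.isLt; omega⟩ with hLdef
  -- right part
  have hRmem : ∀ c : Fin (n - (k:ℕ)),
      (σ ⟨(k:ℕ) + 1 + c, by have := c.isLt; omega⟩ : ℕ) < n - (k:ℕ) := by
    intro c
    refine decomp_right_lt σ hb hav k hk ?_
    exact Fin.lt_iff_val_lt_val.mp (by show (k:ℕ) < (k:ℕ)+1+(c:ℕ); omega)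
  set R : Fin (n - (k:ℕ)) → Fin (n - (k:ℕ)) := fun c =>
    ⟨(σ ⟨(k:ℕ) + 1 + c, by have := c.isLt; omega⟩ : ℕ), hRmem c⟩ with hRdef
  -- L bijective
  have hLinj : Function.Injective L := by
    intro a b hab
    have h1 := (hLmem a).1
    have h2 := (hLmem b).1
    have hv := congrArg Fin.val hab
    simp only [hLdef] at hv
    have : (σ ⟨a, by have := a.isLt; have := k.isLt; omega⟩ : ℕ)
        = (σ ⟨b, by have := b.isLt; have := k.isLt; omega⟩ : ℕ) := by omega
    have := hb.injective (Fin.ext this)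
    have := congrArg Fin.val this
    simp only at this
    exact Fin.ext this
  -- R bijective
  have hRinj : Function.Injective R := by
    intro a b hab
    have hv := congrArg Fin.val hab
    simp only [hRdef] at hv
    have := hb.injective (Fin.ext hv)
    have := congrArg Fin.val this
    simp only at this
    exact Fin.ext (by omega)
  -- L avoids
  have hLav : Avoids k L := by
    intro a b c h1 h2 h3 h4
    have g1 := (hLmem a).1
    have g2 := (hLmem b).1
    have g3 := (hLmem c).1
    have h3' := Fin.lt_iff_val_lt_val.mp h3
    have h4' := Fin.lt_iff_val_lt_val.mp h4
    simp only [hLdef] at h3' h4'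
    refine hav ⟨a, by have := a.isLt; have := k.isLt; omega⟩
      ⟨b, by have := b.isLt; have := k.isLt; omega⟩
      ⟨c, by have := c.isLt; have := k.isLt; omega⟩
      (Fin.mk_lt_mk.mpr (by exact_mod_cast h1)) (Fin.mk_lt_mk.mpr (by exact_mod_cast h2))
      (Fin.lt_iff_val_lt_val.mpr (by omega)) (Fin.lt_iff_val_lt_val.mpr (by omega))
  -- R avoids
  have hRav : Avoids (n - (k:ℕ)) R := by
    intro a b c h1 h2 h3 h4
    have h3' := Fin.lt_iff_val_lt_val.mp h3
    have h4' := Fin.lt_iff_val_lt_val.mp h4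
    simp only [hRdef] at h3' h4'
    refine hav ⟨(k:ℕ) + 1 + a, by have := a.isLt; omega⟩
      ⟨(k:ℕ) + 1 + b, by have := b.isLt; omega⟩
      ⟨(k:ℕ) + 1 + c, by have := c.isLt; omega⟩
      (Fin.mk_lt_mk.mpr (by have := Fin.lt_iff_val_lt_val.mp h1; omega))
      (Fin.mk_lt_mk.mpr (by have := Fin.lt_iff_val_lt_val.mp h2; omega))
      (Fin.lt_iff_val_lt_val.mpr (by omega)) (Fin.lt_iff_val_lt_val.mpr (by omega))
  refine ⟨⟨k, ⟨L, Finite.injective_iff_bijective.mp hLinj, hLav⟩,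
    ⟨R, Finite.injective_iff_bijective.mp hRinj, hRav⟩⟩, ?_⟩
  apply Subtype.ext
  funext a
  show glueFun n k L R a = σ a
  rcases lt_trichotomy (a : ℕ) (k : ℕ) with h | h | h
  · rw [glueFun_lt n k L R a h]
    have := (hLmem ⟨a, h⟩).1
    refine Fin.ext ?_
    simp only [hLdef]
    have hcast : (⟨((⟨(a:ℕ), h⟩ : Fin k) : ℕ), by have := k.isLt; omega⟩ : Fin (n+1)) = a :=
      Fin.ext rfl
    rw [hcast] at this ⊢
    omega
  · rw [glueFun_eq n k L R a h]
    have : a = k := Fin.ext h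
    rw [this, hk]
  · rw [glueFun_gt n k L R a h]
    refine Fin.ext ?_
    simp only [hRdef]
    have hcast : (⟨(k:ℕ) + 1 + ((⟨(a:ℕ) - k - 1, by have := a.isLt; omega⟩ : Fin (n - k)) : ℕ),
        by have := a.isLt; omega⟩ : Fin (n+1)) = a := Fin.ext (by simp; omega)
    rw [hcast]

lemma card_avperm_zero : Nat.card (AvPerm 0) = 1 := by
  have : Unique (AvPerm 0) := {
    default := ⟨fun x => x, Function.bijective_id, fun a => a.elim0⟩
    uniq := fun σ => Subtype.ext (funext fun x => x.elim0) }
  exact Nat.card_unique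

lemma card_avperm_succ (n : ℕ) :
    Nat.card (AvPerm (n+1)) = ∑ k : Fin (n+1), Nat.card (AvPerm k) * Nat.card (AvPerm (n - k)) := by
  classical
  have hbij : Function.Bijective (glue n) := ⟨glue_injective n, glue_surjective n⟩
  have := Nat.card_eq_of_bijective (glue n) hbij
  rw [← this, Nat.card_eq_fintype_card, Fintype.card_sigma]
  congr 1
  funext k
  rw [Fintype.card_prod, Nat.card_eq_fintype_card, Nat.card_eq_fintype_card]

lemma card_avperm (n : ℕ) : Nat.card (AvPerm n) = catalan n := by
  induction n using Nat.strong_induction_on with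
  | _ n ih =>
    match n with
    | 0 => simpa using card_avperm_zero
    | (m+1) =>
      rw [card_avperm_succ, catalan_succ]
      refine Finset.sum_congr rfl fun k _ => ?_
      rw [ih k (by have := k.isLt; omega), ih (m - k) (by have := k.isLt; omega)]

/-- The magog special condition, phrased for a permutation function. -/
def MCond (n : ℕ) (σ : Fin n → Fin n) : Prop :=
  ∀ (i j : ℕ) (hi : i + 2 < n) (hj : j + 2 < n),
    (∃ i' : Fin n, (i' : ℕ) ≤ i ∧ ((σ i' : ℕ) = j)) →
    ((σ ⟨i+1, by omega⟩ : ℕ) ≤ j ∨ ∃ i' : Fin n, (i' : ℕ) ≤ i + 1 ∧ ((σ i' : ℕ) = j + 1))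

lemma avoids_of_mcond {n : ℕ} {σ : Fin n → Fin n} (hb : Function.Bijective σ)
    (hC : MCond n σ) : Avoids n σ := by
  suffices h : ∀ m : ℕ, ∀ a b c : Fin n, n - (σ a : ℕ) ≤ m →
      a < b → b < c → σ a < σ c → σ c < σ b → False by
    intro a b c hab hbc h1 h2
    exact h n a b c (by omega) hab hbc h1 h2
  intro m
  induction m with
  | zero => intro a b c hm _ _ _ _; have := (σ a).isLt; omega
  | succ m ih =>
    intro a b c hm hab hbc h1 h2
    have h1' := Fin.lt_iff_val_lt_val.mp h1
    have h2' := Fin.lt_iff_val_lt_val.mp h2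
    have hab' := Fin.lt_iff_val_lt_val.mp hab
    have hbc' := Fin.lt_iff_val_lt_val.mp hbc
    have hcn := c.isLt
    have hsbn := (σ b).isLt
    have hj1 : (σ a : ℕ) + 1 < n := by omega
    obtain ⟨p, hp⟩ := hb.surjective ⟨(σ a : ℕ) + 1, hj1⟩
    have hpval : (σ p : ℕ) = (σ a : ℕ) + 1 := by rw [hp]
    by_cases hpb : (b : ℕ) < (p : ℕ)
    · -- direct contradiction via the condition at (b-1, σ a)
      have hcond := hC ((b : ℕ) - 1) (σ a) (by omega) (by omega)
        ⟨a, by omega, rfl⟩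
      rcases hcond with hcase | ⟨i', hi', hvi'⟩
      · have hbb : (⟨(b : ℕ) - 1 + 1, by omega⟩ : Fin n) = b := Fin.ext (by simp; omega)
        rw [hbb] at hcase
        omega
      · have : i' = p := hb.injective (Fin.ext (by omega))
        subst this
        omega
    · -- recurse with first index p
      have hpa : p ≠ a := fun e => by rw [e] at hpval; omega
      have hpb' : p ≠ b := fun e => by rw [e] at hpval; omega
      have hscj : (σ c : ℕ) ≠ (σ a : ℕ) + 1 := by
        intro e
        have : c = p := hb.injective (Fin.ext (by omega))
        subst this
        have := Fin.lt_iff_val_lt_val.mp hbc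
        omega
      refine ih p b c (by omega) ?_ hbc ?_ h2
      · refine Fin.lt_iff_val_lt_val.mpr ?_
        have : (p : ℕ) ≠ b := fun e => hpb' (Fin.ext e)
        omega
      · exact Fin.lt_iff_val_lt_val.mpr (by omega)

lemma mcond_of_avoids {n : ℕ} {σ : Fin n → Fin n} (hb : Function.Bijective σ)
    (hav : Avoids n σ) : MCond n σ := by
  intro i j hi hj ⟨a, ha, hva⟩
  by_contra hcon
  push_neg at hcon
  obtain ⟨hc1, hc2⟩ := hcon
  obtain ⟨c, hc⟩ := hb.surjective ⟨j + 1, by omega⟩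
  have hcval : (σ c : ℕ) = j + 1 := by rw [hc]
  have hcgt : i + 1 < (c : ℕ) := by
    by_contra h
    exact absurd (hcval) (by have := hc2 c (by omega); omega)
  set b : Fin n := ⟨i + 1, by omega⟩ with hbdef
  have hsbb : (σ b : ℕ) ≠ j + 1 := by
    intro e
    have : b = c := hb.injective (Fin.ext (by omega))
    rw [hbdef] at this
    have := congrArg Fin.val this
    simp at this
    omega
  refine hav a b c ?_ ?_ ?_ ?_
  · exact Fin.lt_iff_val_lt_val.mpr (by simp [hbdef]; omega)
  · exact Fin.lt_iff_val_lt_val.mpr (by simp [hbdef]; omega)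
  · exact Fin.lt_iff_val_lt_val.mpr (by omega)
  · exact Fin.lt_iff_val_lt_val.mpr (by omega)

lemma sum_ind {n : ℕ} (s : Finset (Fin n)) (x : Fin n) :
    ∑ j' ∈ s, (if x = j' then (1:ℤ) else 0) = if x ∈ s then 1 else 0 := by
  rw [Finset.sum_ite_eq s x (fun _ => (1:ℤ))]

lemma sum_exists_ind {n : ℕ} {σ : Fin n → Fin n} (hinj : Function.Injective σ)
    (s : Finset (Fin n)) (j : Fin n) :
    ∑ i' ∈ s, (if σ i' = j then (1:ℤ) else 0) = if ∃ i' ∈ s, σ i' = j then 1 else 0 := by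
  by_cases h : ∃ i' ∈ s, σ i' = j
  · obtain ⟨i0, hi0, he⟩ := h
    rw [if_pos ⟨i0, hi0, he⟩]
    rw [Finset.sum_eq_single i0]
    · rw [if_pos he]
    · intro b _ hb
      rw [if_neg (fun e => hb (hinj (e.trans he.symm)))]
    · intro hh; exact absurd hi0 hh
  · rw [if_neg h]
    refine Finset.sum_eq_zero fun i' hi' => ?_
    rw [if_neg (fun e => h ⟨i', hi', e⟩)]

def indMat {n : ℕ} (σ : Fin n → Fin n) : Fin n → Fin n → ℤ :=
  fun i j => if σ i = j then 1 else 0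


lemma indMat_good {n : ℕ} (σ : Fin n → Fin n) (hb : Function.Bijective σ) (hC : MCond n σ) :
    IsMagog n (indMat σ) ∧ ∀ i j, indMat σ i j ≠ -1 := by
  have hrow : ∀ (i : Fin n) (s : Finset (Fin n)),
      ∑ j' ∈ s, indMat σ i j' = if σ i ∈ s then 1 else 0 := fun i s => sum_ind s (σ i)
  have hcol : ∀ (j : Fin n) (s : Finset (Fin n)),
      ∑ i' ∈ s, indMat σ i' j = if ∃ i' ∈ s, σ i' = j then 1 else 0 := fun j s =>
    sum_exists_ind hb.injective s j
  refine ⟨⟨⟨?_, ?_, ?_, ?_, ?_⟩, ?_⟩, ?_⟩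
  · intro i j; unfold indMat; split_ifs <;> simp
  · intro j
    rw [hcol j Finset.univ, if_pos]
    obtain ⟨i, hi⟩ := hb.surjective j
    exact ⟨i, Finset.mem_univ i, hi⟩
  · intro i
    rw [hrow i Finset.univ, if_pos (Finset.mem_univ _)]
  · intro i j
    rw [hcol j (Finset.Iic i)]
    split_ifs <;> norm_num
  · intro i j
    rw [hrow i (Finset.Iic j)]
    split_ifs <;> norm_num
  · intro i j hi hj
    rw [hrow, hcol, hcol]
    have hC' := hC i j hi hj
    by_cases hZ : ∃ i' ∈ Finset.Iic (⟨i, by omega⟩ : Fin n), σ i' = ⟨j, by omega⟩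
    · obtain ⟨a, ha, hva⟩ := hZ
      have h1 : (σ (⟨i+1, by omega⟩ : Fin n) : ℕ) ≤ j ∨
          ∃ i' : Fin n, (i' : ℕ) ≤ i + 1 ∧ ((σ i' : ℕ) = j + 1) := by
        refine hC' ⟨a, ?_, ?_⟩
        · exact Fin.le_def.mp (Finset.mem_Iic.mp ha)
        · rw [hva]
      rcases h1 with h1 | ⟨i', hi', hvi'⟩
      · rw [if_pos (Finset.mem_Iic.mpr (Fin.le_def.mpr h1))]
        split_ifs <;> norm_num
      · rw [if_pos (show ∃ i'' ∈ Finset.Iic (⟨i+1, by omega⟩ : Fin n), σ i'' = ⟨j+1, by omega⟩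
          from ⟨i', Finset.mem_Iic.mpr (Fin.le_def.mpr hi'), Fin.ext hvi'⟩)]
        split_ifs <;> norm_num
    · rw [if_neg hZ]
      split_ifs <;> norm_num
  · intro i j; unfold indMat; split_ifs <;> norm_num

def toMat (n : ℕ) : {σ : Fin n → Fin n // Function.Bijective σ ∧ MCond n σ} →
    {A : Fin n → Fin n → ℤ // IsMagog n A ∧ ∀ i j, A i j ≠ -1} :=
  fun x => ⟨indMat x.1, indMat_good x.1 x.2.1 x.2.2⟩

lemma toMat_injective (n : ℕ) : Function.Injective (toMat n) := by
  rintro ⟨σ, hσ⟩ ⟨σ', hσ'⟩ h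
  have hA : indMat σ = indMat σ' := congrArg Subtype.val h
  refine Subtype.ext (funext fun i => ?_)
  have := congrFun (congrFun hA i) (σ i)
  unfold indMat at this
  rw [if_pos rfl] at this
  by_contra hne
  rw [if_neg (fun e : σ' i = σ i => hne e.symm)] at this
  norm_num at this

lemma toMat_surjective (n : ℕ) : Function.Surjective (toMat n) := by
  rintro ⟨A, ⟨⟨hent, hcolsum, hrowsum, hpartcol, hpartrow⟩, hsp⟩, hneg⟩
  classical
  have hent01 : ∀ i j, A i j = 0 ∨ A i j = 1 := by
    intro i j
    rcases hent i j with h | h | h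
    · exact absurd h (hneg i j)
    · exact Or.inl h
    · exact Or.inr h
  have hex : ∀ i, ∃ j, A i j = 1 := by
    intro i
    by_contra h
    push_neg at h
    have : ∑ j, A i j = 0 := Finset.sum_eq_zero fun j _ => by
      rcases hent01 i j with h0 | h1
      · exact h0
      · exact absurd h1 (h j)
    rw [hrowsum i] at this
    norm_num at this
  choose σ hσ using hex
  have hzero : ∀ i j, σ i ≠ j → A i j = 0 := by
    intro i j hne
    have hsum := hrowsum i
    rw [← Finset.sum_erase_add _ _ (Finset.mem_univ (σ i))] at hsum
    rw [hσ i] at hsum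
    have h0 : ∑ j' ∈ Finset.univ.erase (σ i), A i j' = 0 := by omega
    have := (Finset.sum_eq_zero_iff_of_nonneg (fun j' _ => by
      rcases hent01 i j' with h | h <;> omega)).mp h0 j
      (Finset.mem_erase.mpr ⟨fun e => hne e.symm, Finset.mem_univ j⟩)
    exact this
  have hAind : A = indMat σ := by
    funext i j
    unfold indMat
    split_ifs with h
    · rw [← h]; exact hσ i
    · exact hzero i j h
  have hinj : Function.Injective σ := by
    intro i1 i2 he
    by_contra hne
    have hsum := hcolsum (σ i1)
    have hle : ∑ i ∈ ({i1, i2} : Finset (Fin n)), A i (σ i1) ≤ ∑ i, A i (σ i1) :=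
      Finset.sum_le_sum_of_subset_of_nonneg (Finset.subset_univ _)
        (fun i _ _ => by rcases hent01 i (σ i1) with h | h <;> omega)
    rw [Finset.sum_pair hne] at hle
    rw [hσ i1] at hle
    rw [show A i2 (σ i1) = 1 from by rw [he]; exact hσ i2] at hle
    omega
  have hbij : Function.Bijective σ := Finite.injective_iff_bijective.mp hinj
  have hrow : ∀ (i : Fin n) (s : Finset (Fin n)),
      ∑ j' ∈ s, indMat σ i j' = if σ i ∈ s then 1 else 0 := fun i s => sum_ind s (σ i)
  have hcol : ∀ (j : Fin n) (s : Finset (Fin n)),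
      ∑ i' ∈ s, indMat σ i' j = if ∃ i' ∈ s, σ i' = j then 1 else 0 := fun j s =>
    sum_exists_ind hinj s j
  have hmc : MCond n σ := by
    intro i j hi hj ⟨a, ha, hva⟩
    have hineq := hsp i j hi hj
    rw [hAind] at hineq
    rw [hrow, hcol, hcol] at hineq
    rw [if_pos (show ∃ i' ∈ Finset.Iic (⟨i, by omega⟩ : Fin n), σ i' = ⟨j, by omega⟩ from
      ⟨a, Finset.mem_Iic.mpr (Fin.le_def.mpr ha), Fin.ext hva⟩)] at hineq
    by_contra hcon
    push_neg at hcon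
    obtain ⟨h1, h2⟩ := hcon
    rw [if_neg (show ¬ σ (⟨i+1, by omega⟩ : Fin n) ∈ Finset.Iic (⟨j, by omega⟩ : Fin n) by
      intro h
      have hh := Fin.le_def.mp (Finset.mem_Iic.mp h)
      have hj' : ((⟨j, by omega⟩ : Fin n) : ℕ) = j := rfl
      rw [hj'] at hh
      omega)] at hineq
    rw [if_neg (show ¬ ∃ i' ∈ Finset.Iic (⟨i+1, by omega⟩ : Fin n), σ i' = ⟨j+1, by omega⟩ by
      rintro ⟨i', hi', hvi'⟩
      exact absurd (congrArg Fin.val hvi') (h2 i' (Fin.le_def.mp (Finset.mem_Iic.mp hi'))))]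
      at hineq
    norm_num at hineq
  exact ⟨⟨σ, hbij, hmc⟩, Subtype.ext hAind.symm⟩

/-- The number of `n × n` magog matrices with no entry equal to `-1` is the
`n`-th Catalan number `(1/(n+1)) * C(2n, n)`. -/
theorem card_magog_no_neg_one (n : ℕ) (hn : 0 < n) :
    Nat.card {A : Fin n → Fin n → ℤ // IsMagog n A ∧ ∀ i j, A i j ≠ -1} =
      (2 * n).choose n / (n + 1) := by
  have h1 : Nat.card {σ : Fin n → Fin n // Function.Bijective σ ∧ MCond n σ} =
      Nat.card {A : Fin n → Fin n → ℤ // IsMagog n A ∧ ∀ i j, A i j ≠ -1} :=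
    Nat.card_eq_of_bijective (toMat n) ⟨toMat_injective n, toMat_surjective n⟩
  have h2 : Nat.card {σ : Fin n → Fin n // Function.Bijective σ ∧ MCond n σ} =
      Nat.card (AvPerm n) :=
    Nat.card_congr (Equiv.subtypeEquivRight fun σ =>
      ⟨fun h => ⟨h.1, avoids_of_mcond h.1 h.2⟩, fun h => ⟨h.1, mcond_of_avoids h.1 h.2⟩⟩)
  rw [← h1, h2, card_avperm, catalan_eq_centralBinom_div, Nat.centralBinom]
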